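/- arXiv:2205.04867 — 7 statements merged into one kernel-verified Lean document; each statement's English description precedes it below -/
import Mathlib

section
/- Let 0 < q < 1 and let p, r, y, f, h : ℝ → ℝ. Assume that for all x ≠ 0: (1/q)·(D_{q⁻¹}(D_q y))(x) + p(x)·(D_{q⁻¹}y)(x) + r(x)·y(x) = 0, and (1/q)·(D_{q⁻¹}f)(x) = p(x)·f(x). Then for all x ≠ 0, the q-derivative at x of the function G(x) := f(x/q)·( y(x/q)·(D_{q⁻¹}h)(x) − h(x/q)·(D_{q⁻¹}y)(x) ) equals f(x)·( (1/q)·(D_{q⁻¹}(D_q h))(x) + p(x)·(D_{q⁻¹}h)(x) + r(x)·h(x) )·y(x). (Equivalently, G is an indefinite Jackson q-integral of the latter function.) -/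
/-- The Jackson `q`-derivative `(D_q f)(x) = (f(x) - f(qx)) / ((1-q)x)`. -/
noncomputable def qDeriv (q : ℝ) (f : ℝ → ℝ) (x : ℝ) : ℝ :=
  (f x - f (q * x)) / ((1 - q) * x)

/-- The `q⁻¹`-derivative `(D_{q⁻¹} f)(x) = q (f(x/q) - f(x)) / ((1-q)x)`. -/
noncomputable def qInvDeriv (q : ℝ) (f : ℝ → ℝ) (x : ℝ) : ℝ :=
  q * (f (x / q) - f x) / ((1 - q) * x)

/-- Lagrangian method for homogeneous second-order q-difference equations
(version with `D_{q⁻¹}` in the first-order term). -/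
theorem lagrangian_HSOqDE (q : ℝ) (hq : 0 < q) (hq1 : q < 1)
    (p r y f h : ℝ → ℝ)
    (hy : ∀ x : ℝ, x ≠ 0 →
      (1 / q) * qInvDeriv q (qDeriv q y) x + p x * qInvDeriv q y x + r x * y x = 0)
    (hf : ∀ x : ℝ, x ≠ 0 → (1 / q) * qInvDeriv q f x = p x * f x) :
    ∀ x : ℝ, x ≠ 0 →
      qDeriv q
        (fun t => f (t / q) * (y (t / q) * qInvDeriv q h t - h (t / q) * qInvDeriv q y t)) x
      = f x * ((1 / q) * qInvDeriv q (qDeriv q h) x + p x * qInvDeriv q h x + r x * h x)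
          * y x := by
  intro x hx
  have hq0 : q ≠ 0 := hq.ne'
  have h1q : (1:ℝ) - q ≠ 0 := sub_ne_zero.mpr hq1.ne'
  have h1 := hy x hx
  have h2 := hf x hx
  have e1 : q * (x / q) = x := by field_simp
  have e2 : q * x / q = x := by field_simp
  simp only [qDeriv, qInvDeriv, e1, e2] at h1 h2 ⊢
  field_simp at h1 h2 ⊢
  ring_nf at h1 h2 ⊢
  linear_combination (q*(h (x*q⁻¹) * y x - y (x*q⁻¹) * h x)) * h2
    + (-(f x * h x)) * h1
end

section
/- Let 0 < q < 1 and let p, r, y, f, h : ℝ → ℝ. Assume that for all x ≠ 0: (1/q)·(D_{q⁻¹}(D_q y))(x) + p(x)·(D_q y)(x) + r(x)·y(x) = 0, and (D_q f)(x) = p(x)·f(x). Then for all x ≠ 0, the q-derivative at x of the function G(x) := f(x)·( y(x)·(D_{q⁻¹}h)(x) − h(x)·(D_{q⁻¹}y)(x) ) equals f(x)·( (1/q)·(D_{q⁻¹}(D_q h))(x) + p(x)·(D_q h)(x) + r(x)·h(x) )·y(x). -/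
set_option maxHeartbeats 1000000 in
/-- Lagrangian method for homogeneous second-order q-difference equations
(version with `D_q` in the first-order term). -/
theorem lagrangian_HSOqDE' (q : ℝ) (hq : 0 < q) (hq1 : q < 1)
    (p r y f h : ℝ → ℝ)
    (hy : ∀ x : ℝ, x ≠ 0 →
      (1 / q) * qInvDeriv q (qDeriv q y) x + p x * qDeriv q y x + r x * y x = 0)
    (hf : ∀ x : ℝ, x ≠ 0 → qDeriv q f x = p x * f x) :
    ∀ x : ℝ, x ≠ 0 →
      qDeriv q
        (fun t => f t * (y t * qInvDeriv q h t - h t * qInvDeriv q y t)) x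
      = f x * ((1 / q) * qInvDeriv q (qDeriv q h) x + p x * qDeriv q h x + r x * h x)
          * y x := by
  intro x hx
  have hq0 : q ≠ 0 := ne_of_gt hq
  have ht : (1 : ℝ) - q ≠ 0 := by linarith
  have hqx : q * x ≠ 0 := mul_ne_zero hq0 hx
  have hcancel : q * (x / q) = x := by field_simp
  have hcancel2 : q * x / q = x := by field_simp
  have hE1 := hy x hx
  have hE2 := hf x hx
  simp only [qDeriv, qInvDeriv, hcancel, hcancel2] at hE1 hE2 ⊢
  field_simp at hE1 hE2 ⊢
  linear_combination (-(f x * h x)) * hE1 +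
    (y (q*x) * h x - y x * h (q*x)) * hE2
end

section
/- Let 0 < q < 1 and let p, r, g, y, f, h : ℝ → ℝ. Assume that for all x ≠ 0: (1/q)·(D_{q⁻¹}(D_q y))(x) + p(x)·(D_{q⁻¹}y)(x) + r(x)·y(x) = g(x), and (1/q)·(D_{q⁻¹}f)(x) = p(x)·f(x). Then for all x ≠ 0, the q-derivative at x of the function G(x) := f(x/q)·( y(x/q)·(D_{q⁻¹}h)(x) − h(x/q)·(D_{q⁻¹}y)(x) ) satisfies (D_q G)(x) + f(x)·h(x)·g(x) = f(x)·( (1/q)·(D_{q⁻¹}(D_q h))(x) + p(x)·(D_{q⁻¹}h)(x) + r(x)·h(x) )·y(x). -/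
/-- Lagrangian method for nonhomogeneous second-order q-difference equations
(version with `D_{q⁻¹}` in the first-order term). -/
theorem lagrangian_NHSOqDE (q : ℝ) (hq : 0 < q) (hq1 : q < 1)
    (p r g y f h : ℝ → ℝ)
    (hy : ∀ x : ℝ, x ≠ 0 →
      (1 / q) * qInvDeriv q (qDeriv q y) x + p x * qInvDeriv q y x + r x * y x = g x)
    (hf : ∀ x : ℝ, x ≠ 0 → (1 / q) * qInvDeriv q f x = p x * f x) :
    ∀ x : ℝ, x ≠ 0 →
      qDeriv q
        (fun t => f (t / q) * (y (t / q) * qInvDeriv q h t - h (t / q) * qInvDeriv q y t)) x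
      + f x * h x * g x
      = f x * ((1 / q) * qInvDeriv q (qDeriv q h) x + p x * qInvDeriv q h x + r x * h x)
          * y x := by
  intro x hx
  have hq0 : q ≠ 0 := ne_of_gt hq
  have hq1' : (1 : ℝ) - q ≠ 0 := by linarith
  have hgy := hy x hx
  have hfy := hf x hx
  have e1 : q * x / q = x := by field_simp
  have e2 : q * (x / q) = x := by field_simp
  have e3 : (1 - q) * (x / q) = ((1 - q) * x) / q := by ring
  have e4 : (1 - q) * (q * x) = q * ((1 - q) * x) := by ring
  simp only [qDeriv, qInvDeriv, e1, e2, e3, e4] at hgy hfy ⊢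
  have hd : (1 - q) * x ≠ 0 := mul_ne_zero hq1' hx
  set a := y (x / q); set b := y x; set c := y (q * x)
  set A := h (x / q); set B := h x; set C := h (q * x)
  set F := f (x / q); set Fx := f x
  set d := (1 - q) * x with hdd
  clear_value a b c A B C F Fx d
  have E1 : q * a - (1 + q) * b + c + p x * (q * (a - b)) * d + r x * b * d ^ 2
      = g x * d ^ 2 := by
    field_simp at hgy
    have h2 : (q * a - (1 + q) * b + c + p x * (q * (a - b)) * d + r x * b * d ^ 2
        - g x * d ^ 2) * d = 0 := by linear_combination d * hgy
    rcases mul_eq_zero.mp h2 with h' | h'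
    · linarith
    · exact absurd h' hd
  have E2 : F - Fx = p x * Fx * d := by
    field_simp at hfy
    linear_combination hfy
  field_simp
  linear_combination (-(Fx * B)) * E1 + (q * (A * b - a * B)) * E2
end

section
/- Let 0 < q < 1 and let p, r, g, y, f, h : ℝ → ℝ. Assume that for all x ≠ 0: (1/q)·(D_{q⁻¹}(D_q y))(x) + p(x)·(D_q y)(x) + r(x)·y(x) = g(x), and (D_q f)(x) = p(x)·f(x). Then for all x ≠ 0, the q-derivative at x of the function G(x) := f(x)·( y(x)·(D_{q⁻¹}h)(x) − h(x)·(D_{q⁻¹}y)(x) ) satisfies (D_q G)(x) + f(x)·h(x)·g(x) = f(x)·( (1/q)·(D_{q⁻¹}(D_q h))(x) + p(x)·(D_q h)(x) + r(x)·h(x) )·y(x). -/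
/-- Lagrangian method for nonhomogeneous second-order q-difference equations
(version with `D_q` in the first-order term). -/
theorem lagrangian_NHSOqDE' (q : ℝ) (hq : 0 < q) (hq1 : q < 1)
    (p r g y f h : ℝ → ℝ)
    (hy : ∀ x : ℝ, x ≠ 0 →
      (1 / q) * qInvDeriv q (qDeriv q y) x + p x * qDeriv q y x + r x * y x = g x)
    (hf : ∀ x : ℝ, x ≠ 0 → qDeriv q f x = p x * f x) :
    ∀ x : ℝ, x ≠ 0 →
      qDeriv q (fun t => f t * (y t * qInvDeriv q h t - h t * qInvDeriv q y t)) x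
      + f x * h x * g x
      = f x * ((1 / q) * qInvDeriv q (qDeriv q h) x + p x * qDeriv q h x + r x * h x)
          * y x := by
  intro x hx
  have hq0 : q ≠ 0 := ne_of_gt hq
  have h1q : (1 : ℝ) - q ≠ 0 := by linarith
  have hqx : q * x ≠ 0 := mul_ne_zero hq0 hx
  have e1 : q * (x / q) = x := by field_simp
  have e2 : q * x / q = x := by field_simp
  have hfx := hf x hx
  have hgx := hy x hx
  rw [qDeriv] at hfx
  have hfq : f (q * x) = f x - (1 - q) * x * (p x * f x) := by
    field_simp at hfx
    linarith [hfx]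
  rw [← hgx]
  simp only [qDeriv, qInvDeriv, e1, e2, hfq]
  field_simp
  ring
end

section
/- Let 0 < q < 1 and let p, r, y, f, h : ℝ → ℝ. Assume that for all x ≠ 0: (1/q)·(D_{q⁻¹}(D_q y))(x) + p(x)·(D_{q⁻¹}y)(x) + r(x)·y(x) = 0; (1/q)·(D_{q⁻¹}f)(x) = p(x)·f(x); f(x) ≠ 0; and h satisfies the inhomogeneous equation (1/q)·(D_{q⁻¹}(D_q h))(x) + p(x)·(D_{q⁻¹}h)(x) + r(x)·h(x) = 1/f(x). Then for all x ≠ 0, the q-derivative at x of the function G(x) := f(x/q)·( y(x/q)·(D_{q⁻¹}h)(x) − h(x/q)·(D_{q⁻¹}y)(x) ) equals y(x); moreover for all x ≠ 0 one has y(x/q)·(D_{q⁻¹}h)(x) − h(x/q)·(D_{q⁻¹}y)(x) = y(x)·(D_{q⁻¹}h)(x) − h(x)·(D_{q⁻¹}y)(x). -/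
/-- q-antiderivative of a solution `y` itself, obtained from a solution `h`
of the inhomogeneous equation with right-hand side `1/f`. -/
theorem q_antiderivative_of_solution (q : ℝ) (hq : 0 < q) (hq1 : q < 1)
    (p r y f h : ℝ → ℝ)
    (hy : ∀ x : ℝ, x ≠ 0 →
      (1 / q) * qInvDeriv q (qDeriv q y) x + p x * qInvDeriv q y x + r x * y x = 0)
    (hf : ∀ x : ℝ, x ≠ 0 → (1 / q) * qInvDeriv q f x = p x * f x)
    (hf0 : ∀ x : ℝ, x ≠ 0 → f x ≠ 0)
    (hh : ∀ x : ℝ, x ≠ 0 →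
      (1 / q) * qInvDeriv q (qDeriv q h) x + p x * qInvDeriv q h x + r x * h x = 1 / f x) :
    (∀ x : ℝ, x ≠ 0 →
      qDeriv q
        (fun t => f (t / q) * (y (t / q) * qInvDeriv q h t - h (t / q) * qInvDeriv q y t)) x
      = y x)
    ∧ (∀ x : ℝ, x ≠ 0 →
      y (x / q) * qInvDeriv q h x - h (x / q) * qInvDeriv q y x
        = y x * qInvDeriv q h x - h x * qInvDeriv q y x) := by
  have hq0 : q ≠ 0 := ne_of_gt hq
  have h1q : (1:ℝ) - q ≠ 0 := by linarith
  constructor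
  · intro x hx
    have e1 := hy x hx
    have e2 := hh x hx
    have e3 := hf x hx
    have hfx := hf0 x hx
    have k1 : q * (x / q) = x := by field_simp
    have k2 : q * x / q = x := by field_simp
    simp only [qDeriv, qInvDeriv, k1, k2] at e1 e2 e3 ⊢
    field_simp at e1 e2 e3 ⊢
    linear_combination (y x) * e2 - (f x * h x) * e1 +
      (q * (y x * (h (x/q) - h x) - h x * (y (x/q) - y x))) * e3
  · intro x hx
    simp only [qInvDeriv]
    field_simp
    ring
end

section
/- Let 0 < q < 1, and let m, ν be real numbers with ν > −1 and m + ν > 0. Then for all x > 0, the q-derivative at x of the function G(x) := q^{ν−m}·x^{m+1}·( (([m]_q − [ν]_q)/x)·J_ν^{(3)}(x/q; q²) + J_{ν+1}^{(3)}(x; q²)/(1−q) ) equals x^{m+1}·( 1/(1−q)² − ([ν]_q² − q^{ν−m}·[m]_q²)/x² )·J_ν^{(3)}(x; q²). -/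
/-- The finite q-shifted factorial `(z; q)_n`. -/
noncomputable def qPoch (z q : ℝ) (n : ℕ) : ℝ :=
  ∏ k ∈ Finset.range n, (1 - z * q ^ k)

/-- The infinite q-shifted factorial `(z; q)_∞`. -/
noncomputable def qPochInf (z q : ℝ) : ℝ :=
  ∏' k : ℕ, (1 - z * q ^ k)

/-- The q-bracket `[ν]_q = (1 - q^ν)/(1 - q)` for a real `ν` (rpow). -/
noncomputable def qBracket (q ν : ℝ) : ℝ := (1 - q ^ ν) / (1 - q)

/-- The third Jackson q-Bessel function `J_ν^{(3)}(x; q²)`. -/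
noncomputable def J3 (q ν x : ℝ) : ℝ :=
  (qPochInf (q ^ (2 * ν + 2)) (q ^ 2) / qPochInf (q ^ 2) (q ^ 2)) *
    ∑' n : ℕ, ((-1 : ℝ) ^ n * q ^ (n * (n + 1)) * x ^ (2 * (n : ℝ) + ν)) /
      (qPoch (q ^ 2) (q ^ 2) n *
        ∏ j ∈ Finset.range n, (1 - q ^ (2 * ν + 2 + 2 * (j : ℝ))))

namespace QB

noncomputable def Jterm (q ν x : ℝ) (n : ℕ) : ℝ :=
  ((-1 : ℝ) ^ n * q ^ (n * (n + 1)) * x ^ (2 * (n : ℝ) + ν)) /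
    (qPoch (q ^ 2) (q ^ 2) n *
      ∏ j ∈ Finset.range n, (1 - q ^ (2 * ν + 2 + 2 * (j : ℝ))))

lemma J3_eq (q ν x : ℝ) : J3 q ν x =
    (qPochInf (q ^ (2 * ν + 2)) (q ^ 2) / qPochInf (q ^ 2) (q ^ 2)) *
      ∑' n : ℕ, Jterm q ν x n := rfl

variable {q m ν x : ℝ} {n : ℕ}

lemma q_rpow_two_mul (q : ℝ) (n : ℕ) : q ^ (2 * (n : ℝ)) = (q ^ 2) ^ n := by
  rw [show (2 * (n : ℝ)) = ((2 * n : ℕ) : ℝ) by push_cast; ring, Real.rpow_natCast, pow_mul]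

lemma qsq_lt_one (hq : 0 < q) (hq1 : q < 1) : q ^ 2 < 1 := by nlinarith

lemma qpow_lt_one (hq : 0 < q) (hq1 : q < 1) {e : ℝ} (he : 0 < e) : q ^ e < 1 :=
  Real.rpow_lt_one hq.le hq1 he

lemma qPoch_pos (hq : 0 < q) (hq1 : q < 1) (n : ℕ) : 0 < qPoch (q ^ 2) (q ^ 2) n := by
  refine Finset.prod_pos fun k _ => ?_
  have h1 : (q ^ 2) ^ k ≤ 1 := pow_le_one₀ (by positivity) (qsq_lt_one hq hq1).le
  nlinarith [pow_pos (show (0:ℝ) < q ^ 2 by positivity) k]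

lemma dprod_pos (hq : 0 < q) (hq1 : q < 1) (hν : -1 < ν) (n : ℕ) :
    0 < ∏ j ∈ Finset.range n, (1 - q ^ (2 * ν + 2 + 2 * (j : ℝ))) := by
  refine Finset.prod_pos fun j _ => ?_
  have hj : (0:ℝ) ≤ (j : ℝ) := Nat.cast_nonneg j
  have he : (0:ℝ) < 2 * ν + 2 + 2 * (j : ℝ) := by linarith
  have := qpow_lt_one hq hq1 he
  linarith

lemma Jterm_pos_parts (hq : 0 < q) (hq1 : q < 1) (hν : -1 < ν) (hx : 0 < x) (n : ℕ) :
    Jterm q ν x n ≠ 0 := by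
  unfold Jterm
  have h1 := qPoch_pos hq hq1 n
  have h2 := dprod_pos hq hq1 hν n
  have h3 : (0:ℝ) < q ^ (n * (n + 1)) := by positivity
  have h4 : (0:ℝ) < x ^ (2 * (n : ℝ) + ν) := Real.rpow_pos_of_pos hx _
  have h5 : ((-1:ℝ)) ^ n ≠ 0 := by
    simp [pow_ne_zero]
  exact div_ne_zero (by positivity) (by positivity)

lemma qPoch_succ (q : ℝ) (n : ℕ) :
    qPoch (q ^ 2) (q ^ 2) (n + 1) = qPoch (q ^ 2) (q ^ 2) n * (1 - (q ^ 2) ^ (n + 1)) := by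
  unfold qPoch
  rw [Finset.prod_range_succ, ← pow_succ']

lemma exp_split (hq : 0 < q) (n : ℕ) :
    q ^ (2 * ν + 2 + 2 * (n : ℝ)) = q ^ (2 * ν + 2) * (q ^ 2) ^ n := by
  rw [Real.rpow_add hq, q_rpow_two_mul]

lemma dprod_succ (hq : 0 < q) (n : ℕ) :
    (∏ j ∈ Finset.range (n + 1), (1 - q ^ (2 * ν + 2 + 2 * (j : ℝ)))) =
      (∏ j ∈ Finset.range n, (1 - q ^ (2 * ν + 2 + 2 * (j : ℝ)))) *
        (1 - q ^ (2 * ν + 2) * (q ^ 2) ^ n) := by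
  rw [Finset.prod_range_succ, exp_split hq]

lemma dprod_nu (hq : 0 < q) (n : ℕ) :
    (∏ j ∈ Finset.range n, (1 - q ^ (2 * ν + 2 + 2 * (j : ℝ)))) *
        (1 - q ^ (2 * ν + 2) * (q ^ 2) ^ n) =
      (1 - q ^ (2 * ν + 2)) *
        ∏ j ∈ Finset.range n, (1 - q ^ (2 * (ν + 1) + 2 + 2 * (j : ℝ))) := by
  rw [← dprod_succ hq, Finset.prod_range_succ']
  have h0 : 2 * ν + 2 + 2 * ((0 : ℕ) : ℝ) = 2 * ν + 2 := by norm_num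
  rw [h0, mul_comm]
  congr 1
  refine Finset.prod_congr rfl fun j _ => ?_
  congr 1
  push_cast
  ring

lemma xpow_succ (hx : 0 < x) (n : ℕ) :
    x ^ (2 * ((n : ℝ) + 1) + ν) = x ^ (2 * (n : ℝ) + ν) * x ^ 2 := by
  rw [show (2 * ((n : ℝ) + 1) + ν) = (2 * (n : ℝ) + ν) + ((2:ℕ):ℝ) by push_cast; ring,
    Real.rpow_add hx, Real.rpow_natCast]

lemma Jterm_succ (hq : 0 < q) (hq1 : q < 1) (hν : -1 < ν) (hx : 0 < x) (n : ℕ) :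
    Jterm q ν x (n + 1) * ((1 - (q ^ 2) ^ (n + 1)) * (1 - q ^ (2 * ν + 2) * (q ^ 2) ^ n)) =
      Jterm q ν x n * (-((q ^ 2) ^ (n + 1) * x ^ 2)) := by
  have hP : qPoch (q ^ 2) (q ^ 2) n ≠ 0 := by
    unfold qPoch
    refine Finset.prod_ne_zero_iff.2 fun k _ => ?_
    have : (q ^ 2) ^ (k+1) < 1 := by
      apply pow_lt_one₀ (by positivity) (by nlinarith) (Nat.succ_ne_zero k)
    rw [← pow_succ']
    nlinarith
  have hD : (∏ j ∈ Finset.range n, (1 - q ^ (2 * ν + 2 + 2 * (j : ℝ)))) ≠ 0 := by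
    refine Finset.prod_ne_zero_iff.2 fun j _ => ?_
    have hj : (0:ℝ) ≤ (j : ℝ) := Nat.cast_nonneg j
    have : q ^ (2 * ν + 2 + 2 * (j : ℝ)) < 1 :=
      Real.rpow_lt_one hq.le hq1 (by linarith)
    linarith
  have hA : (1 - (q ^ 2) ^ (n + 1)) ≠ 0 := by
    have : (q ^ 2) ^ (n + 1) < 1 := pow_lt_one₀ (by positivity) (by nlinarith) (Nat.succ_ne_zero n)
    linarith
  have hB : (1 - q ^ (2 * ν + 2) * (q ^ 2) ^ n) ≠ 0 := by
    have h1 : q ^ (2 * ν + 2) * (q ^ 2) ^ n = q ^ (2 * ν + 2 + 2 * (n : ℝ)) := (exp_split hq n).symm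
    have h2 : q ^ (2 * ν + 2 + 2 * (n : ℝ)) < 1 := by
      have hn : (0:ℝ) ≤ (n : ℝ) := Nat.cast_nonneg n
      exact Real.rpow_lt_one hq.le hq1 (by linarith)
    rw [h1]; linarith
  unfold Jterm
  rw [qPoch_succ, dprod_succ hq]
  push_cast
  rw [show 2 * ((n:ℝ) + 1) + ν = (2 * (n : ℝ) + ν) + ((2:ℕ):ℝ) by push_cast; ring,
    Real.rpow_add hx, Real.rpow_natCast,
    show (n+1) * (n+1+1) = n * (n+1) + 2 * (n+1) by ring, pow_add, pow_mul]
  rw [div_mul_eq_mul_div, div_mul_eq_mul_div, div_eq_div_iff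
    (mul_ne_zero (mul_ne_zero hP hA) (mul_ne_zero hD hB)) (mul_ne_zero hP hD)]
  ring

lemma Jterm_nu (hq : 0 < q) (hq1 : q < 1) (hν : -1 < ν) (hx : 0 < x) (n : ℕ) :
    Jterm q (ν + 1) x n * (1 - q ^ (2 * ν + 2) * (q ^ 2) ^ n) =
      Jterm q ν x n * x * (1 - q ^ (2 * ν + 2)) := by
  have key : (∏ j ∈ Finset.range n, (1 - q ^ (2 * ν + 2 + 2 * (j : ℝ)))) *
      (1 - q ^ (2 * ν + 2) * (q ^ 2) ^ n) =
      (1 - q ^ (2 * ν + 2)) *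
        ∏ j ∈ Finset.range n, (1 - q ^ (2 * (ν + 1) + 2 + 2 * (j : ℝ))) := by
    rw [← dprod_succ hq, Finset.prod_range_succ']
    have h0 : 2 * ν + 2 + 2 * ((0 : ℕ) : ℝ) = 2 * ν + 2 := by norm_num
    rw [h0, mul_comm]
    congr 1
    refine Finset.prod_congr rfl fun j _ => ?_
    congr 2
    push_cast
    ring
  have hxp : x ^ (2 * (n : ℝ) + (ν + 1)) = x ^ (2 * (n : ℝ) + ν) * x := by
    rw [show 2 * (n : ℝ) + (ν + 1) = (2 * (n:ℝ) + ν) + 1 by ring, Real.rpow_add hx,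
      Real.rpow_one]
  have hP : qPoch (q ^ 2) (q ^ 2) n ≠ 0 := by
    unfold qPoch
    refine Finset.prod_ne_zero_iff.2 fun k _ => ?_
    have : (q ^ 2) ^ (k+1) < 1 := pow_lt_one₀ (by positivity) (by nlinarith) (Nat.succ_ne_zero k)
    rw [← pow_succ']
    nlinarith
  have hD1 : (∏ j ∈ Finset.range n, (1 - q ^ (2 * (ν+1) + 2 + 2 * (j : ℝ)))) ≠ 0 := by
    refine Finset.prod_ne_zero_iff.2 fun j _ => ?_
    have hj : (0:ℝ) ≤ (j : ℝ) := Nat.cast_nonneg j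
    have : q ^ (2 * (ν+1) + 2 + 2 * (j : ℝ)) < 1 :=
      Real.rpow_lt_one hq.le hq1 (by linarith)
    linarith
  have hD : (∏ j ∈ Finset.range n, (1 - q ^ (2 * ν + 2 + 2 * (j : ℝ)))) ≠ 0 := by
    refine Finset.prod_ne_zero_iff.2 fun j _ => ?_
    have hj : (0:ℝ) ≤ (j : ℝ) := Nat.cast_nonneg j
    have : q ^ (2 * ν + 2 + 2 * (j : ℝ)) < 1 :=
      Real.rpow_lt_one hq.le hq1 (by linarith)
    linarith
  unfold Jterm
  rw [hxp]
  rw [div_mul_eq_mul_div, div_mul_eq_mul_div, div_mul_eq_mul_div, div_eq_div_iff (by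
      exact mul_ne_zero hP hD1) (by exact mul_ne_zero hP hD)]
  calc (-1:ℝ) ^ n * q ^ (n * (n + 1)) * (x ^ (2 * (n:ℝ) + ν) * x) *
        (1 - q ^ (2 * ν + 2) * (q ^ 2) ^ n) * (qPoch (q ^ 2) (q ^ 2) n *
        ∏ j ∈ Finset.range n, (1 - q ^ (2 * ν + 2 + 2 * (j : ℝ))))
      = (-1:ℝ) ^ n * q ^ (n * (n + 1)) * x ^ (2 * (n:ℝ) + ν) * x * qPoch (q ^ 2) (q ^ 2) n *
        ((∏ j ∈ Finset.range n, (1 - q ^ (2 * ν + 2 + 2 * (j : ℝ)))) *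
          (1 - q ^ (2 * ν + 2) * (q ^ 2) ^ n)) := by ring
    _ = _ := by rw [key]; ring

lemma Jterm_div_q (hq : 0 < q) (hx : 0 < x) (n : ℕ) :
    Jterm q ν (x / q) n = Jterm q ν x n / q ^ (2 * (n : ℝ) + ν) := by
  unfold Jterm
  rw [Real.div_rpow hx.le hq.le]
  ring

lemma Jterm_mul_q (hq : 0 < q) (hx : 0 < x) (n : ℕ) :
    Jterm q ν (q * x) n = Jterm q ν x n * q ^ (2 * (n : ℝ) + ν) := by
  unfold Jterm
  rw [Real.mul_rpow hq.le hx.le]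
  ring


lemma summable_Jterm (hq : 0 < q) (hq1 : q < 1) (hν : -1 < ν) (hx : 0 < x) :
    Summable (Jterm q ν x) := by
  have hq2 : (0:ℝ) < q ^ 2 := by positivity
  have hq21 : q ^ 2 < 1 := qsq_lt_one hq hq1
  have t0 : Filter.Tendsto (fun n : ℕ => (q ^ 2) ^ n) Filter.atTop (nhds 0) :=
    tendsto_pow_atTop_nhds_zero_of_lt_one hq2.le hq21
  have hA : ∀ n : ℕ, (0:ℝ) < 1 - (q ^ 2) ^ (n + 1) := fun n => by
    have : (q ^ 2) ^ (n + 1) < 1 := pow_lt_one₀ (by positivity) hq21 (Nat.succ_ne_zero n)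
    linarith
  have hB : ∀ n : ℕ, (0:ℝ) < 1 - q ^ (2 * ν + 2) * (q ^ 2) ^ n := fun n => by
    have h1 : q ^ (2 * ν + 2) * (q ^ 2) ^ n = q ^ (2 * ν + 2 + 2 * (n : ℝ)) := (exp_split hq n).symm
    have hn : (0:ℝ) ≤ (n : ℝ) := Nat.cast_nonneg n
    have h2 : q ^ (2 * ν + 2 + 2 * (n : ℝ)) < 1 := Real.rpow_lt_one hq.le hq1 (by linarith)
    rw [h1]; linarith
  have hg : ∀ n : ℕ, ‖Jterm q ν x (n+1)‖ / ‖Jterm q ν x n‖ =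
      ((q ^ 2) ^ (n + 1) * x ^ 2) /
        ((1 - (q ^ 2) ^ (n + 1)) * (1 - q ^ (2 * ν + 2) * (q ^ 2) ^ n)) := by
    intro n
    have hs := Jterm_succ hq hq1 hν hx n
    have hT0 := Jterm_pos_parts hq hq1 hν hx n
    have habs : |Jterm q ν x (n+1)| * ((1 - (q ^ 2) ^ (n + 1)) *
        (1 - q ^ (2 * ν + 2) * (q ^ 2) ^ n)) = |Jterm q ν x n| * ((q ^ 2) ^ (n + 1) * x ^ 2) := by
      have h := congrArg abs hs
      rwa [abs_mul, abs_mul, abs_of_pos (hA n), abs_of_pos (hB n), abs_mul, abs_neg,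
        abs_of_pos (show (0:ℝ) < (q ^ 2) ^ (n + 1) * x ^ 2 by positivity)] at h
    rw [Real.norm_eq_abs, Real.norm_eq_abs,
      div_eq_div_iff (by simpa using hT0) (ne_of_gt (mul_pos (hA n) (hB n)))]
    linarith [habs]
  refine summable_of_ratio_test_tendsto_lt_one (l := 0) one_pos ?_ ?_
  · exact Filter.Eventually.of_forall fun n => Jterm_pos_parts hq hq1 hν hx n
  · have tnum : Filter.Tendsto (fun n : ℕ => (q ^ 2) ^ (n + 1) * x ^ 2) Filter.atTop (nhds 0) := by
      have h := (t0.const_mul (q ^ 2 * x ^ 2))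
      simp only [mul_zero] at h
      exact h.congr fun n => by ring
    have h1 : Filter.Tendsto (fun n : ℕ => 1 - (q ^ 2) ^ (n + 1)) Filter.atTop (nhds 1) := by
      have h := tendsto_const_nhds (α := ℕ) (f := Filter.atTop) (x := (1:ℝ)) |>.sub
        (t0.const_mul (q ^ 2))
      simp only [mul_zero, sub_zero] at h
      exact h.congr fun n => by ring
    have h2 : Filter.Tendsto (fun n : ℕ => 1 - q ^ (2 * ν + 2) * (q ^ 2) ^ n)
        Filter.atTop (nhds 1) := by
      have h := tendsto_const_nhds (α := ℕ) (f := Filter.atTop) (x := (1:ℝ)) |>.sub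
        (t0.const_mul (q ^ (2 * ν + 2)))
      simpa using h
    have tden := h1.mul h2
    rw [mul_one] at tden
    have := tnum.div tden one_ne_zero
    simp only [zero_div] at this
    exact Filter.Tendsto.congr (fun n => (hg n).symm) this

lemma summable_log_aux {z Q : ℝ} (hz : 0 ≤ z) (hz1 : z < 1) (hQ : 0 ≤ Q) (hQ1 : Q < 1) :
    Summable (fun n : ℕ => Real.log (1 - z * Q ^ n)) := by
  have hb : ∀ n : ℕ, z * Q ^ n ≤ z := fun n => by
    have : Q ^ n ≤ 1 := pow_le_one₀ hQ hQ1.le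
    nlinarith
  have key : ∀ n : ℕ, |Real.log (1 - z * Q ^ n)| ≤ (z / (1 - z)) * Q ^ n := by
    intro n
    set s := z * Q ^ n with hs
    have hs0 : 0 ≤ s := by positivity
    have hsz : s ≤ z := hb n
    have hpos : 0 < 1 - s := by linarith
    have h1 : |Real.log (1 - s)| = -Real.log (1 - s) :=
      abs_of_nonpos (Real.log_nonpos (by linarith) (by linarith))
    have h2 : -Real.log (1 - s) = Real.log (1 - s)⁻¹ := (Real.log_inv _).symm
    have h3 : Real.log (1 - s)⁻¹ ≤ (1 - s)⁻¹ - 1 :=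
      Real.log_le_sub_one_of_pos (by positivity)
    have h4 : (1 - s)⁻¹ - 1 = s / (1 - s) := by field_simp; ring
    have h5 : s / (1 - s) ≤ s / (1 - z) :=
      div_le_div_of_nonneg_left hs0 (by linarith) (by linarith)
    have h6 : s / (1 - z) = (z / (1 - z)) * Q ^ n := by rw [hs]; ring
    calc |Real.log (1 - s)| = Real.log (1 - s)⁻¹ := by rw [h1, h2]
      _ ≤ (1 - s)⁻¹ - 1 := h3
      _ = s / (1 - s) := h4
      _ ≤ s / (1 - z) := h5
      _ = (z / (1 - z)) * Q ^ n := h6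
  have hgeom : Summable (fun n : ℕ => (z / (1 - z)) * Q ^ n) :=
    (summable_geometric_of_lt_one hQ hQ1).mul_left _
  exact Summable.of_abs (hgeom.of_nonneg_of_le (fun n => abs_nonneg _) key)

lemma multipliable_aux {z Q : ℝ} (hz : 0 ≤ z) (hz1 : z < 1) (hQ : 0 ≤ Q) (hQ1 : Q < 1) :
    Multipliable (fun k : ℕ => 1 - z * Q ^ k) := by
  have hpos : ∀ (u : Unit) (n : ℕ), (0:ℝ) < 1 - z * Q ^ n := by
    intro _ n
    have h1 : Q ^ n ≤ 1 := pow_le_one₀ hQ hQ1.le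
    have h2 : z * Q ^ n ≤ z := by nlinarith
    linarith
  have := Real.multipliable_of_summable_log (hpos ())
    (summable_log_aux hz hz1 hQ hQ1)
  exact this

lemma qPochInf_shift {z Q : ℝ} (hz : 0 ≤ z) (hz1 : z < 1) (hQ : 0 ≤ Q) (hQ1 : Q < 1) :
    qPochInf z Q = (1 - z) * qPochInf (z * Q) Q := by
  have hzQ : 0 ≤ z * Q := by positivity
  have hzQ1 : z * Q < 1 := by nlinarith
  have hm : Multipliable (fun n : ℕ => 1 - z * Q ^ (n + 1)) :=
    (multipliable_aux hzQ hzQ1 hQ hQ1).congr fun k => by rw [pow_succ']; ring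
  unfold qPochInf
  rw [tprod_eq_zero_mul' (f := fun k : ℕ => 1 - z * Q ^ k) hm]
  congr 1
  · norm_num
  · exact tprod_congr fun k => by rw [pow_succ']; ring



lemma C_shift (hq : 0 < q) (hq1 : q < 1) (hν : -1 < ν) :
    qPochInf (q ^ (2 * ν + 2)) (q ^ 2) =
      (1 - q ^ (2 * ν + 2)) * qPochInf (q ^ (2 * (ν + 1) + 2)) (q ^ 2) := by
  have h1 : q ^ (2 * (ν + 1) + 2) = q ^ (2 * ν + 2) * q ^ 2 := by
    rw [show 2 * (ν + 1) + 2 = (2 * ν + 2) + ((2:ℕ):ℝ) by push_cast; ring, Real.rpow_add hq,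
      Real.rpow_natCast]
  rw [h1]
  exact qPochInf_shift (le_of_lt (Real.rpow_pos_of_pos hq _))
    (Real.rpow_lt_one hq.le hq1 (by linarith)) (by positivity) (qsq_lt_one hq hq1)

lemma p_zero (hq : 0 < q) (hq1 : q < 1) (hν : -1 < ν) (hx : 0 < x) (m : ℝ) :
    q ^ (ν - m) * (q ^ ν - q ^ m) *
        (Jterm q ν x 0 / q ^ (2 * ((0:ℕ):ℝ) + ν) - q ^ m * Jterm q ν x 0)
      + ((1 - q ^ ν) ^ 2 - q ^ (ν - m) * (1 - q ^ m) ^ 2) * Jterm q ν x 0 = 0 := by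
  rw [show 2 * ((0:ℕ):ℝ) + ν = ν by norm_num, Real.rpow_sub hq]
  have hu : q ^ ν ≠ 0 := ne_of_gt (Real.rpow_pos_of_pos hq _)
  have hv : q ^ m ≠ 0 := ne_of_gt (Real.rpow_pos_of_pos hq _)
  field_simp
  ring

lemma p_succ (hq : 0 < q) (hq1 : q < 1) (hν : -1 < ν) (hx : 0 < x) (m : ℝ) (n : ℕ) :
    q ^ (ν - m) * (q ^ ν - q ^ m) *
        (Jterm q ν x (n+1) / q ^ (2 * ((n+1:ℕ):ℝ) + ν) - q ^ m * Jterm q ν x (n+1))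
      + ((1 - q ^ ν) ^ 2 - q ^ (ν - m) * (1 - q ^ m) ^ 2) * Jterm q ν x (n+1)
    = x ^ 2 * Jterm q ν x n
      - q ^ (ν - m) * x *
        ((Jterm q (ν+1) x n - q ^ m * q * (Jterm q (ν+1) x n * q ^ (2 * (n:ℝ) + (ν+1))))
          / (1 - q ^ (2 * ν + 2))) := by
  have hu : (0:ℝ) < q ^ ν := Real.rpow_pos_of_pos hq _
  have hv : (0:ℝ) < q ^ m := Real.rpow_pos_of_pos hq _
  have hW : (0:ℝ) < (q ^ 2) ^ n := by positivity
  have hq21 : q ^ 2 < 1 := qsq_lt_one hq hq1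
  -- exponent rewrites
  have hz : q ^ (2 * ν + 2) = q ^ ν * q ^ ν * q ^ 2 := by
    rw [show 2 * ν + 2 = ν + ν + ((2:ℕ):ℝ) by push_cast; ring, Real.rpow_add hq,
      Real.rpow_add hq, Real.rpow_natCast]
  have hE1 : q ^ (2 * ((n+1:ℕ):ℝ) + ν) = q ^ 2 * (q ^ 2) ^ n * q ^ ν := by
    rw [show 2 * ((n+1:ℕ):ℝ) + ν = 2 * ((n+1:ℕ):ℝ) + ν by rfl, Real.rpow_add hq,
      q_rpow_two_mul, pow_succ']
  have hE2 : q ^ (2 * (n:ℝ) + (ν+1)) = (q ^ 2) ^ n * q ^ ν * q := by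
    rw [show 2 * (n:ℝ) + (ν+1) = 2 * (n:ℝ) + ν + 1 by ring, Real.rpow_add hq,
      Real.rpow_add hq, Real.rpow_one, q_rpow_two_mul]
  have hνm : q ^ (ν - m) = q ^ ν / q ^ m := Real.rpow_sub hq ν m
  -- nonvanishing denominators
  have hA0 : q ^ 2 * (q ^ 2) ^ n < 1 := by
    calc q ^ 2 * (q ^ 2) ^ n ≤ q ^ 2 * 1 := by
          have := pow_le_one₀ (show (0:ℝ) ≤ q ^ 2 by positivity) hq21.le (n := n)
          nlinarith
      _ < 1 := by linarith
  have hB0 : q ^ ν * q ^ ν * q ^ 2 * (q ^ 2) ^ n < 1 := by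
    have h1 : q ^ ν * q ^ ν * q ^ 2 * (q ^ 2) ^ n = q ^ (2 * ν + 2 + 2 * (n : ℝ)) := by
      rw [exp_split hq, hz]
    have hn : (0:ℝ) ≤ (n : ℝ) := Nat.cast_nonneg n
    rw [h1]
    exact Real.rpow_lt_one hq.le hq1 (by linarith)
  have hzlt : q ^ ν * q ^ ν * q ^ 2 < 1 := by
    have h1 : q ^ ν * q ^ ν * q ^ 2 = q ^ (2 * ν + 2) := hz.symm
    rw [h1]
    exact Real.rpow_lt_one hq.le hq1 (by linarith)
  have hAne : (1 : ℝ) - q ^ 2 * (q ^ 2) ^ n ≠ 0 := by linarith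
  have hBne : (1 : ℝ) - q ^ ν * q ^ ν * q ^ 2 * (q ^ 2) ^ n ≠ 0 := by linarith
  have hzne : (1 : ℝ) - q ^ ν * q ^ ν * q ^ 2 ≠ 0 := by linarith
  -- recurrences
  have hsucc := Jterm_succ hq hq1 hν hx n
  have hnu := Jterm_nu hq hq1 hν hx n
  rw [hz] at hsucc hnu ⊢
  rw [pow_succ' (q ^ 2) n] at hsucc
  have hT1 : Jterm q ν x (n+1) =
      Jterm q ν x n * (-(q ^ 2 * (q ^ 2) ^ n * x ^ 2)) /
        ((1 - q ^ 2 * (q ^ 2) ^ n) * (1 - q ^ ν * q ^ ν * q ^ 2 * (q ^ 2) ^ n)) := by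
    rw [eq_div_iff (mul_ne_zero hAne hBne)]
    linear_combination hsucc
  have hU : Jterm q (ν+1) x n =
      Jterm q ν x n * x * (1 - q ^ ν * q ^ ν * q ^ 2) /
        (1 - q ^ ν * q ^ ν * q ^ 2 * (q ^ 2) ^ n) := by
    rw [eq_div_iff hBne]
    linear_combination hnu
  rw [hT1, hU, hE1, hE2, hνm]
  generalize q ^ ν = a at *
  generalize (q ^ 2) ^ n = W at *
  generalize hAd : (1 - q ^ 2 * W) = A at hAne ⊢
  generalize hBd : (1 - a * a * q ^ 2 * W) = B at hBne ⊢
  generalize hZd : (1 - a * a * q ^ 2) = Z at hzne ⊢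
  field_simp
  subst hAd hBd hZd
  ring


lemma star (hq : 0 < q) (hq1 : q < 1) (hν : -1 < ν) (hx : 0 < x) (m : ℝ) :
    q ^ (ν - m) * (q ^ ν - q ^ m) * (J3 q ν (x / q) - q ^ m * J3 q ν x)
      + q ^ (ν - m) * x * (J3 q (ν + 1) x - q ^ m * q * J3 q (ν + 1) (q * x))
    = (x ^ 2 - ((1 - q ^ ν) ^ 2 - q ^ (ν - m) * (1 - q ^ m) ^ 2)) * J3 q ν x := by
  have hν1 : (-1 : ℝ) < ν + 1 := by linarith
  have hxq : 0 < x / q := by positivity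
  have hqx : 0 < q * x := by positivity
  have hz1 : q ^ (2 * ν + 2) < 1 := Real.rpow_lt_one hq.le hq1 (by linarith)
  have hzne : (1 : ℝ) - q ^ (2 * ν + 2) ≠ 0 := by linarith
  set C := qPochInf (q ^ (2 * ν + 2)) (q ^ 2) / qPochInf (q ^ 2) (q ^ 2) with hC
  set K := (1 - q ^ ν) ^ 2 - q ^ (ν - m) * (1 - q ^ m) ^ 2 with hK
  -- summability
  have hT : Summable (Jterm q ν x) := summable_Jterm hq hq1 hν hx
  have hU : Summable (Jterm q (ν + 1) x) := summable_Jterm hq hq1 hν1 hx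
  have hT' : Summable (fun n : ℕ => Jterm q ν x n / q ^ (2 * (n:ℝ) + ν)) :=
    (summable_Jterm hq hq1 hν hxq).congr fun n => Jterm_div_q hq hx n
  have hU' : Summable (fun n : ℕ => Jterm q (ν + 1) x n * q ^ (2 * (n:ℝ) + (ν + 1))) :=
    (summable_Jterm hq hq1 hν1 hqx).congr fun n => Jterm_mul_q hq hx n
  -- J3 expressions
  have e1 : J3 q ν x = C * ∑' n : ℕ, Jterm q ν x n := J3_eq q ν x
  have e2 : J3 q ν (x / q) = C * ∑' n : ℕ, Jterm q ν x n / q ^ (2 * (n:ℝ) + ν) := by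
    rw [J3_eq]
    congr 1
    exact tsum_congr fun n => Jterm_div_q hq hx n
  have hCs : qPochInf (q ^ (2 * (ν + 1) + 2)) (q ^ 2) / qPochInf (q ^ 2) (q ^ 2) =
      C / (1 - q ^ (2 * ν + 2)) := by
    rw [hC, C_shift hq hq1 hν, eq_div_iff hzne]
    ring
  have e3 : J3 q (ν + 1) x = C / (1 - q ^ (2 * ν + 2)) * ∑' n : ℕ, Jterm q (ν + 1) x n := by
    rw [J3_eq, hCs]
  have e4 : J3 q (ν + 1) (q * x) = C / (1 - q ^ (2 * ν + 2)) *
      ∑' n : ℕ, Jterm q (ν + 1) x n * q ^ (2 * (n:ℝ) + (ν + 1)) := by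
    rw [J3_eq, hCs]
    congr 1
    exact tsum_congr fun n => Jterm_mul_q hq hx n
  -- the two series
  set p : ℕ → ℝ := fun n =>
    q ^ (ν - m) * (q ^ ν - q ^ m) *
        (Jterm q ν x n / q ^ (2 * (n:ℝ) + ν) - q ^ m * Jterm q ν x n)
      + K * Jterm q ν x n with hp
  set r : ℕ → ℝ := fun n =>
    x ^ 2 * Jterm q ν x n
      - q ^ (ν - m) * x *
        ((Jterm q (ν+1) x n - q ^ m * q * (Jterm q (ν+1) x n * q ^ (2 * (n:ℝ) + (ν+1))))
          / (1 - q ^ (2 * ν + 2))) with hr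
  have hsp : Summable p := by
    apply Summable.add
    · exact ((hT'.sub (hT.mul_left _)).mul_left _)
    · exact hT.mul_left _
  have hmain : ∑' n : ℕ, p n = ∑' n : ℕ, r n := by
    rw [Summable.tsum_eq_zero_add hsp]
    have h0 : p 0 = 0 := by
      rw [hp]
      simpa using p_zero hq hq1 hν hx m
    rw [h0, zero_add]
    refine tsum_congr fun n => ?_
    rw [hp, hr]
    simpa using p_succ hq hq1 hν hx m n
  -- linearity
  have hptsum : ∑' n : ℕ, p n =
      q ^ (ν - m) * (q ^ ν - q ^ m) *
          ((∑' n : ℕ, Jterm q ν x n / q ^ (2 * (n:ℝ) + ν)) - q ^ m * ∑' n : ℕ, Jterm q ν x n)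
        + K * ∑' n : ℕ, Jterm q ν x n := by
    rw [hp, Summable.tsum_add ((hT'.sub (hT.mul_left _)).mul_left _) (hT.mul_left _),
      tsum_mul_left, tsum_mul_left, Summable.tsum_sub hT' (hT.mul_left _), tsum_mul_left]
  have hrtsum : ∑' n : ℕ, r n =
      x ^ 2 * (∑' n : ℕ, Jterm q ν x n)
        - q ^ (ν - m) * x *
          (((∑' n : ℕ, Jterm q (ν+1) x n) - q ^ m * q *
            ∑' n : ℕ, Jterm q (ν+1) x n * q ^ (2 * (n:ℝ) + (ν+1))) / (1 - q ^ (2 * ν + 2))) := by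
    rw [hr, Summable.tsum_sub (hT.mul_left _)
        (((hU.sub (hU'.mul_left _)).div_const _).mul_left _),
      tsum_mul_left, tsum_mul_left, tsum_div_const, Summable.tsum_sub hU (hU'.mul_left _), tsum_mul_left]
  rw [e1, e2, e3, e4]
  rw [hptsum, hrtsum] at hmain
  set S1 := ∑' n : ℕ, Jterm q ν x n
  set S2 := ∑' n : ℕ, Jterm q ν x n / q ^ (2 * (n:ℝ) + ν)
  set S3 := ∑' n : ℕ, Jterm q (ν+1) x n
  set S4 := ∑' n : ℕ, Jterm q (ν+1) x n * q ^ (2 * (n:ℝ) + (ν+1))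
  field_simp at hmain ⊢
  linear_combination C * hmain


end QB

/-- Indefinite q-integral of `x^{m+1}(1/(1-q)² − ([ν]² − q^{ν−m}[m]²)/x²) J_ν^{(3)}(x;q²)`. -/
theorem qIntegral_J3_power (q m ν : ℝ) (hq : 0 < q) (hq1 : q < 1)
    (hν : -1 < ν) (hmν : 0 < m + ν) :
    ∀ x : ℝ, 0 < x →
      qDeriv q
        (fun t => q ^ (ν - m) * t ^ (m + 1) *
          ((qBracket q m - qBracket q ν) / t * J3 q ν (t / q)
            + J3 q (ν + 1) t / (1 - q))) x
      = x ^ (m + 1) *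
          (1 / (1 - q) ^ 2 - ((qBracket q ν) ^ 2 - q ^ (ν - m) * (qBracket q m) ^ 2) / x ^ 2)
          * J3 q ν x := by
  intro x hx
  have hstar := QB.star hq hq1 hν hx m
  have h1 : q * x / q = x := mul_div_cancel_left₀ x (ne_of_gt hq)
  have h2 : (q * x) ^ (m+1) = q ^ (m+1) * x ^ (m+1) := Real.mul_rpow hq.le hx.le
  have h3 : q ^ (m+1) = q ^ m * q := by rw [Real.rpow_add hq, Real.rpow_one]
  have h4 : q ^ (ν-m) = q ^ ν / q ^ m := Real.rpow_sub hq ν m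
  have hu : (0:ℝ) < q ^ ν := Real.rpow_pos_of_pos hq _
  have hv : (0:ℝ) < q ^ m := Real.rpow_pos_of_pos hq _
  have hq' : (1:ℝ) - q ≠ 0 := by linarith
  rw [h4] at hstar
  simp only [qDeriv, qBracket, h1, h2, h3, h4]
  have expand :
      (q ^ ν / q ^ m * x ^ (m + 1) *
          (((1 - q ^ m) / (1 - q) - (1 - q ^ ν) / (1 - q)) / x * J3 q ν (x / q)
            + J3 q (ν + 1) x / (1 - q))
        - q ^ ν / q ^ m * (q ^ m * q * x ^ (m + 1)) *
          (((1 - q ^ m) / (1 - q) - (1 - q ^ ν) / (1 - q)) / (q * x) * J3 q ν x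
            + J3 q (ν + 1) (q * x) / (1 - q))) / ((1 - q) * x)
      = x ^ (m + 1) / ((1 - q) ^ 2 * x ^ 2) *
          (q ^ ν / q ^ m * (q ^ ν - q ^ m) * (J3 q ν (x / q) - q ^ m * J3 q ν x)
            + q ^ ν / q ^ m * x * (J3 q (ν + 1) x - q ^ m * q * J3 q (ν + 1) (q * x))) := by
    field_simp
    ring
  rw [expand, hstar]
  field_simp
end

section
/- Let 0 < q < 1 and let ν be a real number with ν > −1. Then for all x > 0, the q-derivative at x of the function G(x) := (1−q)·x^{ν+1}·J_{ν+1}^{(3)}(x; q²) equals x^{ν+1}·J_ν^{(3)}(x; q²). (Equivalently, ∫ x^{ν+1} J_ν^{(3)}(x;q²) d_q x = (1−q)·x^{ν+1}·J_{ν+1}^{(3)}(x;q²).) -/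
open Real Filter Finset

/-- One summand of the series defining `J3`. -/
noncomputable def Sterm (q ν x : ℝ) (n : ℕ) : ℝ :=
  ((-1 : ℝ) ^ n * q ^ (n * (n + 1)) * x ^ (2 * (n : ℝ) + ν)) /
      (qPoch (q ^ 2) (q ^ 2) n *
        ∏ j ∈ Finset.range n, (1 - q ^ (2 * ν + 2 + 2 * (j : ℝ))))

lemma J3_eq (q ν x : ℝ) :
    J3 q ν x = (qPochInf (q ^ (2 * ν + 2)) (q ^ 2) / qPochInf (q ^ 2) (q ^ 2)) *
      ∑' n : ℕ, Sterm q ν x n := rfl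

lemma multipliable_aux {z q : ℝ} (hz : 0 ≤ z) (hz1 : z < 1) (hq : 0 < q) (hq1 : q < 1) :
    Multipliable (fun k : ℕ => 1 - z * q ^ k) := by
  have hpos : ∀ k : ℕ, 0 < 1 - z * q ^ k := by
    intro k
    have h1 : q ^ k ≤ 1 := pow_le_one₀ hq.le hq1.le
    nlinarith [pow_nonneg hq.le k]
  have hb : ∀ k : ℕ, ‖Real.log (1 - z * q ^ k)‖ ≤ (1 - z)⁻¹ * z * q ^ k := by
    intro k
    have h1 : q ^ k ≤ 1 := pow_le_one₀ hq.le hq1.le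
    have h2 : (0:ℝ) ≤ z * q ^ k := by positivity
    have h3 : z * q ^ k ≤ z := by nlinarith
    have h4 : 0 < 1 - z * q ^ k := hpos k
    have h5 : Real.log (1 - z * q ^ k) ≤ 0 := Real.log_nonpos (by linarith) (by linarith)
    rw [Real.norm_eq_abs, abs_of_nonpos h5]
    have h6 : -Real.log (1 - z * q ^ k) = Real.log (1 - z * q ^ k)⁻¹ := (Real.log_inv _).symm
    rw [h6]
    have h7 : Real.log (1 - z * q ^ k)⁻¹ ≤ (1 - z * q ^ k)⁻¹ - 1 :=
      Real.log_le_sub_one_of_pos (by positivity)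
    have h8 : (1 - z * q ^ k)⁻¹ - 1 = (z * q ^ k) / (1 - z * q ^ k) := by
      field_simp
      ring
    have h9 : (z * q ^ k) / (1 - z * q ^ k) ≤ (z * q ^ k) / (1 - z) :=
      div_le_div_of_nonneg_left h2 (by linarith) (by nlinarith)
    rw [h8] at h7
    calc Real.log (1 - z * q ^ k)⁻¹ ≤ (z * q ^ k) / (1 - z) := le_trans h7 h9
      _ = (1 - z)⁻¹ * z * q ^ k := by ring
  have hlog : Summable (fun k : ℕ => Real.log (1 - z * q ^ k)) :=
    Summable.of_norm_bounded ((summable_geometric_of_lt_one hq.le hq1).mul_left ((1 - z)⁻¹ * z)) hb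
  exact Real.multipliable_of_summable_log hpos hlog

set_option maxHeartbeats 1000000 in
lemma qPochInf_split {z q : ℝ} (hz : 0 ≤ z) (hz1 : z < 1) (hq : 0 < q) (hq1 : q < 1) :
    qPochInf z q = (1 - z) * qPochInf (z * q) q := by
  have hm : Multipliable (fun n : ℕ => 1 - z * q ^ (n + 1)) :=
    (multipliable_aux (mul_nonneg hz hq.le) (by nlinarith) hq hq1).congr
      (fun n => by rw [pow_succ']; ring)
  unfold qPochInf
  rw [tprod_eq_zero_mul' hm]
  congr 1
  · norm_num
  · exact tprod_congr fun k => by rw [pow_succ']; ring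

section lemmas
variable {q ν : ℝ} (hq : 0 < q) (hq1 : q < 1) (hν : -1 < ν)

include hq hq1 in
lemma qPoch_pos (n : ℕ) : 0 < qPoch (q ^ 2) (q ^ 2) n := by
  have hq2 : 0 < q ^ 2 := by positivity
  have hq2' : q ^ 2 < 1 := by nlinarith
  refine Finset.prod_pos fun k _ => ?_
  have h1 : (q ^ 2) ^ k ≤ 1 := pow_le_one₀ hq2.le hq2'.le
  nlinarith [pow_nonneg hq2.le k]

include hq hq1 hν in
lemma prodB_pos (n : ℕ) :
    0 < ∏ j ∈ Finset.range n, (1 - q ^ (2 * ν + 2 + 2 * (j : ℝ))) := by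
  refine Finset.prod_pos fun j _ => ?_
  have hj : (0:ℝ) ≤ (j : ℝ) := Nat.cast_nonneg j
  have : q ^ (2 * ν + 2 + 2 * (j : ℝ)) < 1 :=
    Real.rpow_lt_one hq.le hq1 (by linarith)
  linarith

include hq hq1 hν in
lemma Sterm_ne_zero {x : ℝ} (hx : 0 < x) (n : ℕ) : Sterm q ν x n ≠ 0 := by
  have h1 := qPoch_pos hq hq1 n
  have h2 := prodB_pos hq hq1 hν n
  have h3 : (0:ℝ) < x ^ (2 * (n : ℝ) + ν) := Real.rpow_pos_of_pos hx _
  have h4 : (0:ℝ) < q ^ (n * (n + 1)) := pow_pos hq _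
  unfold Sterm
  have h5 : ((-1 : ℝ) ^ n) ≠ 0 := by
    rcases Nat.even_or_odd n with h | h
    · rw [h.neg_one_pow]; norm_num
    · rw [h.neg_one_pow]; norm_num
  positivity

include hq hq1 hν in
lemma Sterm_succ {x : ℝ} (hx : 0 < x) (n : ℕ) :
    Sterm q ν x (n + 1) = Sterm q ν x n *
      (-(x ^ 2 * q ^ 2 * (q ^ 2) ^ n) /
        ((1 - q ^ 2 * (q ^ 2) ^ n) * (1 - q ^ (2 * ν + 2) * (q ^ 2) ^ n))) := by
  have h1 := qPoch_pos hq hq1 n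
  have h2 := prodB_pos hq hq1 hν n
  have e1 : qPoch (q ^ 2) (q ^ 2) (n + 1)
      = qPoch (q ^ 2) (q ^ 2) n * (1 - q ^ 2 * (q ^ 2) ^ n) := by
    unfold qPoch; rw [Finset.prod_range_succ]
  have epow : q ^ (2 * (n:ℝ)) = (q ^ 2) ^ n := by
    rw [← pow_mul, ← Real.rpow_natCast q (2 * n)]
    congr 1; push_cast; ring
  have e2 : (∏ j ∈ Finset.range (n+1), (1 - q ^ (2 * ν + 2 + 2 * (j : ℝ))))
      = (∏ j ∈ Finset.range n, (1 - q ^ (2 * ν + 2 + 2 * (j : ℝ)))) *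
        (1 - q ^ (2 * ν + 2) * (q ^ 2) ^ n) := by
    rw [Finset.prod_range_succ, Real.rpow_add hq, epow]
  have e3 : x ^ (2 * (((n:ℕ):ℝ) + 1) + ν) = x ^ (2 * (n : ℝ) + ν) * x ^ (2:ℕ) := by
    rw [← Real.rpow_natCast x 2, ← Real.rpow_add hx]
    congr 1; push_cast; ring
  have e4 : q ^ ((n+1) * (n + 2)) = q ^ (n * (n + 1)) * (q ^ 2 * (q ^ 2) ^ n) := by
    rw [← pow_mul, ← pow_add, ← pow_add]
    congr 1; ring
  have hd1 : (1 - q ^ 2 * (q ^ 2) ^ n) ≠ 0 := by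
    have := pow_le_one₀ (by positivity : (0:ℝ) ≤ q ^ 2) (by nlinarith : q ^ 2 ≤ 1) (n := n)
    nlinarith
  have hd2 : (1 - q ^ (2 * ν + 2) * (q ^ 2) ^ n) ≠ 0 := by
    have hlt : q ^ (2 * ν + 2) < 1 := Real.rpow_lt_one hq.le hq1 (by linarith)
    have hle : (q ^ 2) ^ n ≤ 1 := pow_le_one₀ (by positivity) (by nlinarith)
    have hpos : (0:ℝ) < q ^ (2 * ν + 2) := Real.rpow_pos_of_pos hq _
    nlinarith
  unfold Sterm
  rw [e1, e2, e4, pow_succ]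
  push_cast
  rw [e3]
  field_simp

include hq hq1 hν in
lemma summable_Sterm {x : ℝ} (hx : 0 < x) : Summable (Sterm q ν x) := by
  have hq2 : 0 < q ^ 2 := by positivity
  have hq2' : q ^ 2 < 1 := by nlinarith
  apply summable_of_ratio_test_tendsto_lt_one (l := 0) one_pos
  · exact Filter.Eventually.of_forall fun n => Sterm_ne_zero hq hq1 hν hx n
  · have hrw : ∀ n : ℕ, ‖Sterm q ν x (n+1)‖ / ‖Sterm q ν x n‖ =
        |(-(x ^ 2 * q ^ 2 * (q ^ 2) ^ n) /
          ((1 - q ^ 2 * (q ^ 2) ^ n) * (1 - q ^ (2 * ν + 2) * (q ^ 2) ^ n)))| := by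
      intro n
      rw [Sterm_succ hq hq1 hν hx n, norm_mul, mul_comm, mul_div_assoc,
        div_self (norm_ne_zero_iff.mpr (Sterm_ne_zero hq hq1 hν hx n)), mul_one,
        Real.norm_eq_abs]
    have h0 : Tendsto (fun n : ℕ => (q ^ 2) ^ n) atTop (nhds 0) :=
      tendsto_pow_atTop_nhds_zero_of_lt_one hq2.le hq2'
    have hnum : Tendsto (fun n : ℕ => -(x ^ 2 * q ^ 2 * (q ^ 2) ^ n)) atTop (nhds 0) := by
      have := (h0.const_mul (x ^ 2 * q ^ 2)).neg
      simpa using this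
    have hden : Tendsto (fun n : ℕ =>
        (1 - q ^ 2 * (q ^ 2) ^ n) * (1 - q ^ (2 * ν + 2) * (q ^ 2) ^ n)) atTop (nhds 1) := by
      have ha : Tendsto (fun n : ℕ => 1 - q ^ 2 * (q ^ 2) ^ n) atTop (nhds 1) := by
        have := (h0.const_mul (q ^ 2)).const_sub 1
        simpa using this
      have hb : Tendsto (fun n : ℕ => 1 - q ^ (2 * ν + 2) * (q ^ 2) ^ n) atTop (nhds 1) := by
        have := (h0.const_mul (q ^ (2 * ν + 2))).const_sub 1
        simpa using this
      simpa using ha.mul hb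
    have hfin := (hnum.div hden one_ne_zero).abs
    simp only [zero_div, abs_zero] at hfin
    exact Tendsto.congr (fun n => (hrw n).symm) hfin

include hq hq1 hν in
lemma key_termwise {x : ℝ} (hx : 0 < x) (n : ℕ) :
    x ^ (ν + 1) * Sterm q (ν + 1) x n - (q * x) ^ (ν + 1) * Sterm q (ν + 1) (q * x) n
      = (1 - q ^ (2 * ν + 2)) * (x * (x ^ (ν + 1) * Sterm q ν x n)) := by
  have hqx : 0 < q * x := by positivity
  have hP := qPoch_pos hq hq1 n
  have hB := prodB_pos hq hq1 hν n
  have hA := prodB_pos hq hq1 (by linarith : (-1:ℝ) < ν + 1) n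
  -- the product identity  (1 - q^{2ν+2+2n}) B = (1 - q^{2ν+2}) A
  have hprod : (1 - q ^ (2 * ν + 2 + 2 * (n:ℝ))) *
      (∏ j ∈ Finset.range n, (1 - q ^ (2 * ν + 2 + 2 * (j : ℝ))))
      = (1 - q ^ (2 * ν + 2)) *
      (∏ j ∈ Finset.range n, (1 - q ^ (2 * (ν + 1) + 2 + 2 * (j : ℝ)))) := by
    have hs := Finset.prod_range_succ (fun j : ℕ => 1 - q ^ (2 * ν + 2 + 2 * (j:ℝ))) n
    have hs' := Finset.prod_range_succ' (fun j : ℕ => 1 - q ^ (2 * ν + 2 + 2 * (j:ℝ))) n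
    have hcomb := hs.symm.trans hs'
    have hconv : (∏ j ∈ Finset.range n, (1 - q ^ (2 * ν + 2 + 2 * ((j:ℕ) + 1 : ℕ) )))
        = (∏ j ∈ Finset.range n, (1 - q ^ (2 * (ν + 1) + 2 + 2 * (j : ℝ)))) := by
      refine Finset.prod_congr rfl fun j _ => ?_
      congr 2
      push_cast; ring
    rw [hconv] at hcomb
    have h0 : (1 - q ^ (2 * ν + 2 + 2 * ((0:ℕ):ℝ))) = 1 - q ^ (2 * ν + 2) := by
      norm_num
    rw [h0] at hcomb
    linear_combination hcomb
  -- exponent manipulations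
  have e1 : x ^ (ν + 1) * x ^ (2 * (n:ℝ) + (ν + 1)) = x ^ (2 * (n:ℝ) + 2 * ν + 2) := by
    rw [← Real.rpow_add hx]; congr 1; ring
  have e2 : (q * x) ^ (ν + 1) * (q * x) ^ (2 * (n:ℝ) + (ν + 1))
      = q ^ (2 * ν + 2 + 2 * (n:ℝ)) * x ^ (2 * (n:ℝ) + 2 * ν + 2) := by
    rw [← Real.rpow_add hqx, Real.mul_rpow hq.le hx.le]
    congr 1
    · congr 1; ring
    · congr 1; ring
  have e3 : x * (x ^ (ν + 1) * x ^ (2 * (n:ℝ) + ν)) = x ^ (2 * (n:ℝ) + 2 * ν + 2) := by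
    nth_rewrite 1 [show x = x ^ (1:ℝ) by rw [Real.rpow_one]]
    rw [← Real.rpow_add hx, ← Real.rpow_add hx]; congr 1; ring
  set N : ℝ := (-1 : ℝ) ^ n * q ^ (n * (n + 1)) with hN
  have L1 : x ^ (ν + 1) * Sterm q (ν + 1) x n
      = N * x ^ (2 * (n:ℝ) + 2 * ν + 2) /
        (qPoch (q ^ 2) (q ^ 2) n *
          ∏ j ∈ Finset.range n, (1 - q ^ (2 * (ν + 1) + 2 + 2 * (j : ℝ)))) := by
    unfold Sterm
    rw [mul_div_assoc']
    congr 1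
    linear_combination N * e1
  have L2 : (q * x) ^ (ν + 1) * Sterm q (ν + 1) (q * x) n
      = N * (q ^ (2 * ν + 2 + 2 * (n:ℝ)) * x ^ (2 * (n:ℝ) + 2 * ν + 2)) /
        (qPoch (q ^ 2) (q ^ 2) n *
          ∏ j ∈ Finset.range n, (1 - q ^ (2 * (ν + 1) + 2 + 2 * (j : ℝ)))) := by
    unfold Sterm
    rw [mul_div_assoc']
    congr 1
    linear_combination N * e2
  have L3 : x * (x ^ (ν + 1) * Sterm q ν x n)
      = N * x ^ (2 * (n:ℝ) + 2 * ν + 2) /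
        (qPoch (q ^ 2) (q ^ 2) n *
          ∏ j ∈ Finset.range n, (1 - q ^ (2 * ν + 2 + 2 * (j : ℝ)))) := by
    unfold Sterm
    rw [mul_div_assoc', mul_div_assoc']
    congr 1
    linear_combination N * e3
  rw [L1, L2, L3, div_sub_div_same, mul_div_assoc',
    div_eq_div_iff (mul_ne_zero hP.ne' hA.ne') (mul_ne_zero hP.ne' hB.ne')]
  linear_combination (N * x ^ (2 * (n:ℝ) + 2 * ν + 2) * qPoch (q ^ 2) (q ^ 2) n) * hprod

end lemmas

/-- `∫ x^{ν+1} J_ν^{(3)}(x;q²) d_q x = (1−q) x^{ν+1} J_{ν+1}^{(3)}(x;q²)`. -/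
theorem qIntegral_J3_nu (q ν : ℝ) (hq : 0 < q) (hq1 : q < 1) (hν : -1 < ν) :
    ∀ x : ℝ, 0 < x →
      qDeriv q (fun t => (1 - q) * t ^ (ν + 1) * J3 q (ν + 1) t) x
        = x ^ (ν + 1) * J3 q ν x := by
  intro x hx
  have hqx : 0 < q * x := by positivity
  have hν1 : (-1:ℝ) < ν + 1 := by linarith
  have hS1 : Summable (Sterm q (ν + 1) x) := summable_Sterm hq hq1 hν1 hx
  have hS2 : Summable (Sterm q (ν + 1) (q * x)) := summable_Sterm hq hq1 hν1 hqx
  have hC : qPochInf (q ^ (2 * ν + 2)) (q ^ 2)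
      = (1 - q ^ (2 * ν + 2)) * qPochInf (q ^ (2 * (ν + 1) + 2)) (q ^ 2) := by
    have hz : (0:ℝ) ≤ q ^ (2 * ν + 2) := (Real.rpow_pos_of_pos hq _).le
    have hz1 : q ^ (2 * ν + 2) < 1 := Real.rpow_lt_one hq.le hq1 (by linarith)
    have hq2 : (0:ℝ) < q ^ 2 := by positivity
    have hq2' : q ^ 2 < 1 := by nlinarith
    rw [qPochInf_split hz hz1 hq2 hq2']
    congr 2
    rw [← Real.rpow_natCast q 2, ← Real.rpow_add hq]
    congr 1; push_cast; ring
  have main : x ^ (ν + 1) * J3 q (ν + 1) x - (q * x) ^ (ν + 1) * J3 q (ν + 1) (q * x)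
      = x * (x ^ (ν + 1) * J3 q ν x) := by
    have t1 : ∑' n : ℕ, (x ^ (ν + 1) * Sterm q (ν + 1) x n
          - (q * x) ^ (ν + 1) * Sterm q (ν + 1) (q * x) n)
        = x ^ (ν + 1) * (∑' n : ℕ, Sterm q (ν + 1) x n)
          - (q * x) ^ (ν + 1) * (∑' n : ℕ, Sterm q (ν + 1) (q * x) n) := by
      rw [Summable.tsum_sub (hS1.mul_left _) (hS2.mul_left _), tsum_mul_left, tsum_mul_left]
    have t2 : ∑' n : ℕ, (x ^ (ν + 1) * Sterm q (ν + 1) x n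
          - (q * x) ^ (ν + 1) * Sterm q (ν + 1) (q * x) n)
        = (1 - q ^ (2 * ν + 2)) * (x * (x ^ (ν + 1) * ∑' n : ℕ, Sterm q ν x n)) := by
      rw [tsum_congr (fun n => key_termwise hq hq1 hν hx n), tsum_mul_left,
        tsum_mul_left, tsum_mul_left]
    have hmix := t1.symm.trans t2
    rw [J3_eq, J3_eq, J3_eq, hC]
    linear_combination (qPochInf (q ^ (2 * (ν + 1) + 2)) (q ^ 2)
      / qPochInf (q ^ 2) (q ^ 2)) * hmix
  simp only [qDeriv]
  rw [div_eq_iff (mul_ne_zero (by linarith : (0:ℝ) < 1 - q).ne' hx.ne')]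
  linear_combination (1 - q) * main
end
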